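/- Given a Szegő system, fix n ∈ ℕ and let Z = (Z_1,…,Z_d) be a d-tuple of m×m complex matrices with Z_1 Z_1^* + ⋯ + Z_d Z_d^* = I_m (a row co-isometry, i.e. Z lies in the distinguished boundary of the row-ball). Then, with Z^* := (Z_1^*,…,Z_d^*): φ^#_{σ(n)}(Z^*)^* φ^#_{σ(n)}(Z^*) = ∑_{σ : |σ| = n} φ_σ(Z^*)^* φ_σ(Z^*), and this matrix is non-singular; in particular det φ^#_{σ(n)}(Z^*) ≠ 0. -/

import Mathlib

open scoped BigOperators ComplexOrder

/-- The shortlex (length-then-lexicographic) order on words in `F_d^+`. -/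
def ShortlexLE {d : ℕ} (σ τ : List (Fin d)) : Prop :=
  σ.length < τ.length ∨ (σ.length = τ.length ∧ (σ = τ ∨ List.Lex (· < ·) σ τ))

/-- The defect `d_σ := √(1 - |γ_σ|²)`. -/
noncomputable def defect {d : ℕ} (γ : List (Fin d) → ℂ) (σ : List (Fin d)) : ℝ :=
  Real.sqrt (1 - ‖γ σ‖ ^ 2)

/-- A Szegő system: Verblunsky coefficients `γ : F_d^+ → ℂ` with `γ_∅ = 0`, `|γ_σ| < 1`,
together with families of noncommutative polynomials `φ, φr (= φ^#)` with `φ_∅ = φ^#_∅ = 1`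
satisfying the Szegő recurrences, where `e : ℕ ≃ F_d^+` is the shortlex order isomorphism and
`τ - 1 := e (e⁻¹ τ - 1)` is the immediate shortlex predecessor. -/
structure SzegoSystem (d : ℕ) where
  /-- the shortlex enumeration of `F_d^+` -/
  e : ℕ ≃ List (Fin d)
  /-- `e` is an order isomorphism onto the shortlex order -/
  he : ∀ m n : ℕ, m ≤ n ↔ ShortlexLE (e m) (e n)
  /-- the Verblunsky coefficients -/
  γ : List (Fin d) → ℂ
  hγ0 : γ [] = 0
  hγlt : ∀ σ : List (Fin d), ‖γ σ‖ < 1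
  /-- the orthonormal polynomials -/
  φ : List (Fin d) → FreeAlgebra ℂ (Fin d)
  /-- the reverse polynomials `φ^#` -/
  φr : List (Fin d) → FreeAlgebra ℂ (Fin d)
  hφ0 : φ [] = 1
  hφr0 : φr [] = 1
  recφ : ∀ (k : Fin d) (σ : List (Fin d)),
    φ (k :: σ) = (((defect γ (k :: σ) : ℝ) : ℂ))⁻¹ •
      (FreeAlgebra.ι ℂ k * φ σ - γ (k :: σ) • φr (e (e.symm (k :: σ) - 1)))
  recφr : ∀ (k : Fin d) (σ : List (Fin d)),
    φr (k :: σ) = (((defect γ (k :: σ) : ℝ) : ℂ))⁻¹ •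
      ((-(starRingEnd ℂ (γ (k :: σ)))) • (FreeAlgebra.ι ℂ k * φ σ) +
        φr (e (e.symm (k :: σ) - 1)))

/-- Evaluation of a noncommutative polynomial at a `d`-tuple of `m×m` matrices. -/
noncomputable def evalM {d m : ℕ} (A : Fin d → Matrix (Fin m) (Fin m) ℂ) :
    FreeAlgebra ℂ (Fin d) →ₐ[ℂ] Matrix (Fin m) (Fin m) ℂ :=
  FreeAlgebra.lift ℂ A

/-- The shortlex-largest word of length `n`: the largest generator repeated `n` times. -/
def sigmaWord (d : ℕ) (hd : 1 ≤ d) (n : ℕ) : List (Fin d) :=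
  List.replicate n (⟨d - 1, by omega⟩ : Fin d)

-- every list is lex-below the replicate of the top element
lemma lex_le_rep {d : ℕ} (t : Fin d) (ht : ∀ a : Fin d, a ≤ t) :
    ∀ (σ : List (Fin d)) (L : ℕ), σ.length = L →
      σ = List.replicate L t ∨ List.Lex (· < ·) σ (List.replicate L t) := by
  intro σ
  induction σ with
  | nil => intro L hL; left; simp [← hL]
  | cons a σ ih =>
    intro L hL
    cases L with
    | zero => simp at hL
    | succ L =>
      rw [List.replicate_succ]
      rcases lt_or_eq_of_le (ht a) with h | h
      · right; exact List.Lex.rel h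
      · subst h
        rcases ih L (by simpa using hL) with h2 | h2
        · left; rw [h2]
        · right; exact List.Lex.cons h2

lemma shortlexLE_rep {d : ℕ} (t : Fin d) (ht : ∀ a : Fin d, a ≤ t)
    {σ : List (Fin d)} {L : ℕ} (hL : σ.length = L) :
    ShortlexLE σ (List.replicate L t) :=
  Or.inr ⟨by simp [hL], lex_le_rep t ht σ L hL⟩

lemma shortlexLE_nil {d : ℕ} (τ : List (Fin d)) : ShortlexLE [] τ := by
  cases τ with
  | nil => exact Or.inr ⟨rfl, Or.inl rfl⟩
  | cons a l => exact Or.inl (by simp)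

lemma not_shortlexLE_of_length_lt {d : ℕ} {σ τ : List (Fin d)}
    (h : τ.length < σ.length) : ¬ ShortlexLE σ τ := by
  rintro (h1 | ⟨h1, -⟩) <;> omega
namespace SzegoAux

variable {d : ℕ}

lemma idx_le_iff (S : SzegoSystem d) (σ τ : List (Fin d)) :
    S.e.symm σ ≤ S.e.symm τ ↔ ShortlexLE σ τ := by
  simpa using S.he (S.e.symm σ) (S.e.symm τ)

lemma e_zero (S : SzegoSystem d) : S.e 0 = [] := by
  have h : S.e.symm ([] : List (Fin d)) ≤ S.e.symm (S.e 0) := by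
    rw [idx_le_iff]; exact shortlexLE_nil _
  simp only [Equiv.symm_apply_apply] at h
  have : S.e.symm ([] : List (Fin d)) = 0 := Nat.le_zero.mp h
  rw [← this, Equiv.apply_symm_apply]

lemma top_le (hd : 1 ≤ d) (a : Fin d) : a ≤ (⟨d - 1, by omega⟩ : Fin d) := by
  rw [Fin.le_def]; have := a.isLt; simp; omega

/-- the words with index in `(idx (σ(L)), idx (σ(L+1))]` are exactly those of length `L+1` -/
lemma level (S : SzegoSystem d) (hd : 1 ≤ d) (L N : ℕ) :
    (S.e.symm (sigmaWord d hd L) < N ∧ N ≤ S.e.symm (sigmaWord d hd (L + 1))) ↔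
      (S.e N).length = L + 1 := by
  constructor
  · rintro ⟨h1, h2⟩
    have hle : ShortlexLE (S.e N) (sigmaWord d hd (L + 1)) := by
      rw [← idx_le_iff S]; simpa using h2
    have hlen2 : (S.e N).length ≤ L + 1 := by
      rcases hle with h | ⟨h, -⟩ <;> simp [sigmaWord] at h <;> omega
    by_contra hne
    have hlenle : (S.e N).length ≤ L := by omega
    have : ShortlexLE (S.e N) (sigmaWord d hd L) := by
      rcases lt_or_eq_of_le hlenle with h | h
      · exact Or.inl (by simp [sigmaWord]; omega)
      · exact shortlexLE_rep _ (top_le hd) h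
    rw [← idx_le_iff S] at this
    simp only [Equiv.symm_apply_apply] at this
    omega
  · intro hlen
    constructor
    · have : ¬ S.e.symm (S.e N) ≤ S.e.symm (sigmaWord d hd L) := by
        rw [idx_le_iff]
        exact not_shortlexLE_of_length_lt (by simp [sigmaWord, hlen])
      simp only [Equiv.symm_apply_apply] at this
      omega
    · have : S.e.symm (S.e N) ≤ S.e.symm (sigmaWord d hd (L + 1)) := by
        rw [idx_le_iff]
        exact shortlexLE_rep _ (top_le hd) (by simp [hlen])
      simpa using this

lemma idx_rep_lt (S : SzegoSystem d) (hd : 1 ≤ d) (L : ℕ) :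
    S.e.symm (sigmaWord d hd L) < S.e.symm (sigmaWord d hd (L + 1)) := by
  have := (level S hd L (S.e.symm (sigmaWord d hd (L + 1)))).mpr
    (by simp [sigmaWord])
  exact this.1

lemma exists_ofFn {α : Type*} : ∀ (l : List α) (n : ℕ), l.length = n →
    ∃ f : Fin n → α, List.ofFn f = l := by
  intro l
  induction l with
  | nil => intro n hn; subst hn; exact ⟨fun i => i.elim0, rfl⟩
  | cons a l ih =>
    intro n hn
    cases n with
    | zero => simp at hn
    | succ n =>
      obtain ⟨g, hg⟩ := ih n (by simpa using hn)
      refine ⟨Fin.cons a g, ?_⟩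
      rw [List.ofFn_succ]
      simp [Fin.cons_zero, Fin.cons_succ, hg]

end SzegoAux
namespace SzegoAux

lemma defect_pos {d : ℕ} (γ : List (Fin d) → ℂ) (σ : List (Fin d))
    (h : ‖γ σ‖ < 1) : 0 < defect γ σ := by
  have h0 : 0 ≤ ‖γ σ‖ := norm_nonneg _
  exact Real.sqrt_pos.mpr (by nlinarith)

lemma defect_sq {d : ℕ} (γ : List (Fin d) → ℂ) (σ : List (Fin d))
    (h : ‖γ σ‖ < 1) :
    ((defect γ σ : ℝ) : ℂ) ^ 2 = 1 - (starRingEnd ℂ) (γ σ) * γ σ := by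
  have h0 : 0 ≤ ‖γ σ‖ := norm_nonneg _
  have h2 : (defect γ σ) ^ 2 = 1 - ‖γ σ‖ ^ 2 :=
    Real.sq_sqrt (by nlinarith)
  have h3 : ((‖γ σ‖ ^ 2 : ℝ) : ℂ) = (starRingEnd ℂ) (γ σ) * γ σ := by
    rw [Complex.sq_norm]
    exact (Complex.normSq_eq_conj_mul_self).symm ▸ rfl
  have h4 : ((defect γ σ : ℝ) : ℂ) ^ 2 = ((1 - ‖γ σ‖ ^ 2 : ℝ) : ℂ) := by
    exact_mod_cast congrArg (fun x : ℝ => (x : ℂ)) h2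
  rw [h4, Complex.ofReal_sub, Complex.ofReal_one, h3]

variable {d m : ℕ}

noncomputable def Phi (S : SzegoSystem d) (Z : Fin d → Matrix (Fin m) (Fin m) ℂ)
    (σ : List (Fin d)) : Matrix (Fin m) (Fin m) ℂ :=
  evalM (fun j => star (Z j)) (S.φ σ)

noncomputable def Psi (S : SzegoSystem d) (Z : Fin d → Matrix (Fin m) (Fin m) ℂ)
    (σ : List (Fin d)) : Matrix (Fin m) (Fin m) ℂ :=
  evalM (fun j => star (Z j)) (S.φr σ)

lemma Psi_nil (S : SzegoSystem d) (Z : Fin d → Matrix (Fin m) (Fin m) ℂ) :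
    Psi S Z [] = 1 := by
  rw [Psi, S.hφr0, map_one]

lemma Phi_nil (S : SzegoSystem d) (Z : Fin d → Matrix (Fin m) (Fin m) ℂ) :
    Phi S Z [] = 1 := by
  rw [Phi, S.hφ0, map_one]

lemma rec_Phi (S : SzegoSystem d) (Z : Fin d → Matrix (Fin m) (Fin m) ℂ)
    (k : Fin d) (σ : List (Fin d)) :
    ((defect S.γ (k :: σ) : ℝ) : ℂ) • Phi S Z (k :: σ) =
      star (Z k) * Phi S Z σ - S.γ (k :: σ) • Psi S Z (S.e (S.e.symm (k :: σ) - 1)) := by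
  have hc : ((defect S.γ (k :: σ) : ℝ) : ℂ) ≠ 0 := by
    exact_mod_cast (defect_pos S.γ (k :: σ) (S.hγlt _)).ne'
  rw [Phi, S.recφ, map_smul, smul_smul, mul_inv_cancel₀ hc, one_smul,
    map_sub, map_mul, map_smul]
  simp [evalM, FreeAlgebra.lift_ι_apply, Phi, Psi]

lemma rec_Psi (S : SzegoSystem d) (Z : Fin d → Matrix (Fin m) (Fin m) ℂ)
    (k : Fin d) (σ : List (Fin d)) :
    ((defect S.γ (k :: σ) : ℝ) : ℂ) • Psi S Z (k :: σ) =
      (-(starRingEnd ℂ) (S.γ (k :: σ))) • (star (Z k) * Phi S Z σ)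
        + Psi S Z (S.e (S.e.symm (k :: σ) - 1)) := by
  have hc : ((defect S.γ (k :: σ) : ℝ) : ℂ) ≠ 0 := by
    exact_mod_cast (defect_pos S.γ (k :: σ) (S.hγlt _)).ne'
  rw [Psi, S.recφr, map_smul, smul_smul, mul_inv_cancel₀ hc, one_smul,
    map_add, map_smul, map_mul]
  simp [evalM, FreeAlgebra.lift_ι_apply, Phi, Psi]

/-- the per-word step identity coming from `J`-unitarity of the Szegő recursion -/
lemma step_eq (S : SzegoSystem d) (Z : Fin d → Matrix (Fin m) (Fin m) ℂ)
    (k : Fin d) (σ : List (Fin d)) :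
    star (Psi S Z (k :: σ)) * Psi S Z (k :: σ) =
      star (Psi S Z (S.e (S.e.symm (k :: σ) - 1))) *
          Psi S Z (S.e (S.e.symm (k :: σ) - 1))
        + star (Phi S Z (k :: σ)) * Phi S Z (k :: σ)
        - star (star (Z k) * Phi S Z σ) * (star (Z k) * Phi S Z σ) := by
  set c : ℂ := ((defect S.γ (k :: σ) : ℝ) : ℂ) with hcdef
  have hc : c ≠ 0 := by
    rw [hcdef]; exact_mod_cast (defect_pos S.γ (k :: σ) (S.hγlt _)).ne'
  set g : ℂ := S.γ (k :: σ) with hgdef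
  set A := star (Z k) * Phi S Z σ with hAdef
  set P := Psi S Z (S.e (S.e.symm (k :: σ) - 1)) with hPdef
  set F := Phi S Z (k :: σ) with hFdef
  set Q := Psi S Z (k :: σ) with hQdef
  have hF : c • F = A - g • P := rec_Phi S Z k σ
  have hQ : c • Q = (-(starRingEnd ℂ) g) • A + P := rec_Psi S Z k σ
  have hc2 : c ^ 2 = 1 - (starRingEnd ℂ) g * g := defect_sq S.γ (k :: σ) (S.hγlt _)
  have hcs : star c = c := by rw [hcdef]; exact Complex.conj_ofReal _
  apply smul_right_injective (Matrix (Fin m) (Fin m) ℂ) (pow_ne_zero 2 hc)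
  show c ^ 2 • (star Q * Q) = c ^ 2 • (star P * P + star F * F - star A * A)
  have expand : ∀ X Y : Matrix (Fin m) (Fin m) ℂ,
      c ^ 2 • (star X * Y) = star (c • X) * (c • Y) := by
    intro X Y
    rw [star_smul, hcs, smul_mul_assoc, mul_smul_comm, smul_smul, sq]
  rw [smul_sub, smul_add, expand Q Q, expand F F, hF, hQ]
  rw [hc2]
  simp only [star_add, star_sub, star_smul, star_neg, starRingEnd_apply,
    star_star, add_mul, mul_add, sub_mul, mul_sub, neg_mul, mul_neg,
    smul_mul_assoc, mul_smul_comm, smul_smul, neg_smul, smul_neg, sub_smul,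
    one_smul, smul_add, smul_sub]
  module

end SzegoAux
namespace SzegoAux

variable {d m : ℕ}

noncomputable def Aw (S : SzegoSystem d) (Z : Fin d → Matrix (Fin m) (Fin m) ℂ) :
    List (Fin d) → Matrix (Fin m) (Fin m) ℂ
  | [] => 0
  | k :: σ => star (Z k) * Phi S Z σ

noncomputable def Dterm (S : SzegoSystem d) (Z : Fin d → Matrix (Fin m) (Fin m) ℂ)
    (N : ℕ) : Matrix (Fin m) (Fin m) ℂ :=
  star (Phi S Z (S.e N)) * Phi S Z (S.e N) - star (Aw S Z (S.e N)) * Aw S Z (S.e N)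

lemma key_step (hd : 1 ≤ d) (S : SzegoSystem d) (Z : Fin d → Matrix (Fin m) (Fin m) ℂ)
    (n N : ℕ) (h1 : S.e.symm (sigmaWord d hd n) < N)
    (h2 : N ≤ S.e.symm (sigmaWord d hd (n + 1))) :
    star (Psi S Z (S.e N)) * Psi S Z (S.e N)
      = star (Psi S Z (S.e (N - 1))) * Psi S Z (S.e (N - 1)) + Dterm S Z N := by
  have hlen : (S.e N).length = n + 1 := (level S hd n N).mp ⟨h1, h2⟩
  obtain ⟨k, σ, hkσ⟩ : ∃ k σ, S.e N = k :: σ := by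
    cases hE : S.e N with
    | nil => rw [hE] at hlen; simp at hlen
    | cons k σ => exact ⟨k, σ, rfl⟩
  have hNidx : S.e.symm (k :: σ) = N := by rw [← hkσ]; simp
  have hstep := step_eq S Z k σ
  rw [hNidx] at hstep
  rw [Dterm, hkσ, hstep]
  show _ = _ + (star (Phi S Z (k :: σ)) * Phi S Z (k :: σ)
      - star (Aw S Z (k :: σ)) * Aw S Z (k :: σ))
  rw [show Aw S Z (k :: σ) = star (Z k) * Phi S Z σ from rfl]
  abel

lemma master (hd : 1 ≤ d) (S : SzegoSystem d) (Z : Fin d → Matrix (Fin m) (Fin m) ℂ)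
    (hZ : (∑ k : Fin d, Z k * star (Z k)) = (1 : Matrix (Fin m) (Fin m) ℂ)) :
    ∀ n : ℕ, star (Psi S Z (sigmaWord d hd n)) * Psi S Z (sigmaWord d hd n)
      = ∑ f : Fin n → Fin d, star (Phi S Z (List.ofFn f)) * Phi S Z (List.ofFn f) := by
  intro n
  induction n with
  | zero =>
      rw [show sigmaWord d hd 0 = ([] : List (Fin d)) from rfl, Psi_nil,
        Fintype.sum_subsingleton _ (fun i : Fin 0 => i.elim0)]
      simp [Phi_nil]
  | succ n ih =>
      set a := S.e.symm (sigmaWord d hd n) with ha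
      set b := S.e.symm (sigmaWord d hd (n + 1)) with hb
      have hab : a < b := idx_rep_lt S hd n
      have tele : ∀ j, a + j ≤ b →
          star (Psi S Z (S.e (a + j))) * Psi S Z (S.e (a + j))
            = star (Psi S Z (S.e a)) * Psi S Z (S.e a)
              + ∑ N ∈ Finset.Ioc a (a + j), Dterm S Z N := by
        intro j
        induction j with
        | zero => intro _; simp
        | succ j ihj =>
            intro hjb
            rw [show a + (j + 1) = (a + j) + 1 from rfl,
              Finset.sum_Ioc_succ_top (by omega : a ≤ a + j)]
            have hk := key_step hd S Z n (a + j + 1) (by omega) (by omega)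
            rw [show a + j + 1 - 1 = a + j from rfl] at hk
            rw [hk, ihj (by omega)]
            abel
      have tb := tele (b - a) (by omega)
      rw [show a + (b - a) = b from by omega] at tb
      have hea : S.e a = sigmaWord d hd n := by rw [ha, Equiv.apply_symm_apply]
      have heb : S.e b = sigmaWord d hd (n + 1) := by rw [hb, Equiv.apply_symm_apply]
      rw [hea, heb] at tb
      -- convert the interval sum to a sum over words of length n+1
      have hsum : (∑ f : Fin (n + 1) → Fin d,
            (star (Phi S Z (List.ofFn f)) * Phi S Z (List.ofFn f)
              - star (Aw S Z (List.ofFn f)) * Aw S Z (List.ofFn f)))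
          = ∑ N ∈ Finset.Ioc a b, Dterm S Z N := by
        refine Finset.sum_bij (fun f _ => S.e.symm (List.ofFn f)) ?_ ?_ ?_ ?_
        · intro f _
          exact Finset.mem_Ioc.mpr ((level S hd n (S.e.symm (List.ofFn f))).mpr (by simp))
        · intro f _ g _ h
          exact List.ofFn_injective (S.e.symm.injective h)
        · intro N hN
          rw [Finset.mem_Ioc] at hN
          obtain ⟨f, hf⟩ := exists_ofFn (S.e N) (n + 1) ((level S hd n N).mp hN)
          exact ⟨f, Finset.mem_univ _, by simp only [hf, Equiv.symm_apply_apply]⟩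
        · intro f _
          rw [Dterm, Equiv.apply_symm_apply]
      -- compute the Aw sum using the co-isometry hypothesis
      have hAw : ∑ f : Fin (n + 1) → Fin d,
            star (Aw S Z (List.ofFn f)) * Aw S Z (List.ofFn f)
          = ∑ g : Fin n → Fin d, star (Phi S Z (List.ofFn g)) * Phi S Z (List.ofFn g) := by
        rw [← Equiv.sum_comp (Fin.consEquiv (fun _ : Fin (n + 1) => Fin d))
          (fun f => star (Aw S Z (List.ofFn f)) * Aw S Z (List.ofFn f)),
          Fintype.sum_prod_type_right]
        refine Finset.sum_congr rfl fun g _ => ?_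
        have hterm : ∀ k : Fin d,
            star (Aw S Z (List.ofFn ((Fin.consEquiv (fun _ : Fin (n + 1) => Fin d)) (k, g)))) *
                Aw S Z (List.ofFn ((Fin.consEquiv (fun _ : Fin (n + 1) => Fin d)) (k, g)))
              = star (Phi S Z (List.ofFn g)) *
                  (Z k * star (Z k) * Phi S Z (List.ofFn g)) := by
          intro k
          have hofn : List.ofFn ((Fin.consEquiv (fun _ : Fin (n + 1) => Fin d)) (k, g))
              = k :: List.ofFn g := by
            show List.ofFn (Fin.cons k g) = _
            rw [List.ofFn_succ]
            simp
          rw [hofn, show Aw S Z (k :: List.ofFn g)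
            = star (Z k) * Phi S Z (List.ofFn g) from rfl, star_mul, star_star]
          rw [mul_assoc, ← mul_assoc (Z k)]
        rw [Finset.sum_congr rfl (fun k _ => hterm k), ← Finset.mul_sum, ← Finset.sum_mul,
          hZ, one_mul]
      rw [Finset.sum_sub_distrib, hAw, ← ih] at hsum
      rw [tb, ← hsum, ih]
      abel

end SzegoAux
namespace SzegoAux

variable {d m : ℕ}

lemma dot_sum {α : Type*} (v : Fin m → ℂ) (s : Finset α) (w : α → Fin m → ℂ) :
    dotProduct v (∑ i ∈ s, w i) = ∑ i ∈ s, dotProduct v (w i) := by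
  simp only [dotProduct, Finset.sum_apply, Finset.mul_sum]
  exact Finset.sum_comm

lemma sum_mulVec' {α : Type*} (s : Finset α) (A : α → Matrix (Fin m) (Fin m) ℂ)
    (v : Fin m → ℂ) : (∑ i ∈ s, A i).mulVec v = ∑ i ∈ s, (A i).mulVec v := by
  ext i
  simp only [Matrix.mulVec, dotProduct, Matrix.sum_apply, Finset.sum_apply,
    Finset.sum_mul]
  exact Finset.sum_comm

lemma dot_grammian (M : Matrix (Fin m) (Fin m) ℂ) (v : Fin m → ℂ) :
    dotProduct (star v) ((star M * M).mulVec v)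
      = dotProduct (star (M.mulVec v)) (M.mulVec v) := by
  rw [← Matrix.mulVec_mulVec, Matrix.dotProduct_mulVec, Matrix.star_eq_conjTranspose,
    ← Matrix.star_mulVec]

lemma kernel (hd : 1 ≤ d) (S : SzegoSystem d) (Z : Fin d → Matrix (Fin m) (Fin m) ℂ)
    (hZ : (∑ k : Fin d, Z k * star (Z k)) = (1 : Matrix (Fin m) (Fin m) ℂ)) :
    ∀ n (v : Fin m → ℂ), (Psi S Z (sigmaWord d hd n)).mulVec v = 0 → v = 0 := by
  intro n
  induction n with
  | zero =>
      intro v hv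
      rwa [show sigmaWord d hd 0 = ([] : List (Fin d)) from rfl, Psi_nil,
        Matrix.one_mulVec] at hv
  | succ n ih =>
      intro v hv
      -- every orthonormal polynomial of level n+1 kills v
      have hsum0 : ∑ f : Fin (n + 1) → Fin d,
          dotProduct (star ((Phi S Z (List.ofFn f)).mulVec v))
            ((Phi S Z (List.ofFn f)).mulVec v) = 0 := by
        have h1 : dotProduct (star v)
            ((∑ f : Fin (n + 1) → Fin d,
              star (Phi S Z (List.ofFn f)) * Phi S Z (List.ofFn f)).mulVec v) = 0 := by
          rw [← master hd S Z hZ (n + 1), ← Matrix.mulVec_mulVec, hv,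
            Matrix.mulVec_zero, dotProduct_zero]
        rw [sum_mulVec', dot_sum] at h1
        rw [← h1]
        exact Finset.sum_congr rfl fun f _ => (dot_grammian _ v).symm
      have hPhiv : ∀ τ : List (Fin d), τ.length = n + 1 → (Phi S Z τ).mulVec v = 0 := by
        intro τ hτ
        obtain ⟨f, hf⟩ := exists_ofFn τ (n + 1) hτ
        have := (Finset.sum_eq_zero_iff_of_nonneg (fun f _ =>
            dotProduct_star_self_nonneg ((Phi S Z (List.ofFn f)).mulVec v))).mp
            hsum0 f (Finset.mem_univ f)
        rw [← hf]
        exact dotProduct_star_self_eq_zero.mp this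
      -- walk down through level n+1
      set a := S.e.symm (sigmaWord d hd n) with ha
      set b := S.e.symm (sigmaWord d hd (n + 1)) with hb
      have hab : a < b := idx_rep_lt S hd n
      have down : ∀ j, j ≤ b - a → (Psi S Z (S.e (b - j))).mulVec v = 0 := by
        intro j
        induction j with
        | zero =>
            intro _
            rw [Nat.sub_zero, hb, Equiv.apply_symm_apply]
            exact hv
        | succ j ihj =>
            intro hj
            have hprev := ihj (by omega)
            have hgt : a < b - j := by omega
            have hlen : (S.e (b - j)).length = n + 1 :=
              (level S hd n (b - j)).mp ⟨hgt, by omega⟩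
            obtain ⟨k, σ, hkσ⟩ : ∃ k σ, S.e (b - j) = k :: σ := by
              cases hE : S.e (b - j) with
              | nil => rw [hE] at hlen; simp at hlen
              | cons k σ => exact ⟨k, σ, rfl⟩
            have hNidx : S.e.symm (k :: σ) = b - j := by rw [← hkσ]; simp
            have hpredidx : S.e.symm (k :: σ) - 1 = b - (j + 1) := by omega
            set Pv := (Psi S Z (S.e (b - (j + 1)))).mulVec v with hPvdef
            set g : ℂ := S.γ (k :: σ) with hgdef
            set c : ℂ := ((defect S.γ (k :: σ) : ℝ) : ℂ) with hcdef
            have hc : c ≠ 0 := by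
              rw [hcdef]; exact_mod_cast (defect_pos S.γ (k :: σ) (S.hγlt _)).ne'
            have hc2 : c ^ 2 = 1 - (starRingEnd ℂ) g * g :=
              defect_sq S.γ (k :: σ) (S.hγlt _)
            have hF := congrArg (fun M => Matrix.mulVec M v) (rec_Phi S Z k σ)
            have hQ := congrArg (fun M => Matrix.mulVec M v) (rec_Psi S Z k σ)
            simp only [Matrix.smul_mulVec, Matrix.sub_mulVec, Matrix.add_mulVec,
              hpredidx, ← hPvdef] at hF hQ
            rw [show Phi S Z (k :: σ) = Phi S Z (S.e (b - j)) from by rw [hkσ]] at hF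
            rw [show Psi S Z (k :: σ) = Psi S Z (S.e (b - j)) from by rw [hkσ]] at hQ
            rw [hPhiv _ hlen, smul_zero] at hF
            rw [hprev, smul_zero] at hQ
            have hAv : (star (Z k) * Phi S Z σ).mulVec v = S.γ (k :: σ) • Pv :=
              sub_eq_zero.mp hF.symm
            rw [hAv, smul_smul] at hQ
            have hexp : (1 - (starRingEnd ℂ) g * g) • Pv
                = (-(starRingEnd ℂ) (S.γ (k :: σ)) * S.γ (k :: σ)) • Pv + Pv := by
              rw [show S.γ (k :: σ) = g from rfl]
              module
            have hQ' : (1 - (starRingEnd ℂ) g * g) • Pv = 0 := by rw [hexp, ← hQ]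
            have h1mg : (1 - (starRingEnd ℂ) g * g) ≠ 0 := by
              rw [← hc2]; exact pow_ne_zero 2 hc
            exact (smul_eq_zero.mp hQ').resolve_left h1mg
      have hfinal := down (b - a) le_rfl
      rw [show b - (b - a) = a from by omega, ha, Equiv.apply_symm_apply] at hfinal
      exact ih v hfinal

end SzegoAux

/-- if `Z` is a row co-isometry (`∑_k Z_k Z_k^* = I`, the distinguished boundary
of the row-ball), then `φ^#_{σ(n)}(Z^*)^* φ^#_{σ(n)}(Z^*) = ∑_{|σ| = n} φ_σ(Z^*)^* φ_σ(Z^*)`,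
and this matrix is non-singular; in particular `det φ^#_{σ(n)}(Z^*) ≠ 0`. -/
theorem boundary_equality_nonsingular {d m : ℕ} (hd : 1 ≤ d) (hm : 1 ≤ m)
    (S : SzegoSystem d) (n : ℕ) (Z : Fin d → Matrix (Fin m) (Fin m) ℂ)
    (hZ : (∑ k : Fin d, Z k * star (Z k)) = (1 : Matrix (Fin m) (Fin m) ℂ)) :
    star (evalM (fun j => star (Z j)) (S.φr (sigmaWord d hd n))) *
        evalM (fun j => star (Z j)) (S.φr (sigmaWord d hd n)) =
      (∑ f : Fin n → Fin d,
        star (evalM (fun j => star (Z j)) (S.φ (List.ofFn f))) *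
          evalM (fun j => star (Z j)) (S.φ (List.ofFn f))) ∧
    (star (evalM (fun j => star (Z j)) (S.φr (sigmaWord d hd n))) *
        evalM (fun j => star (Z j)) (S.φr (sigmaWord d hd n))).det ≠ 0 ∧
    (evalM (fun j => star (Z j)) (S.φr (sigmaWord d hd n))).det ≠ 0 := by

  have hmain := SzegoAux.master hd S Z hZ n
  have hdet : (evalM (fun j => star (Z j)) (S.φr (sigmaWord d hd n))).det ≠ 0 := by
    intro h
    obtain ⟨v, hv0, hv⟩ := Matrix.exists_mulVec_eq_zero_iff.mpr h
    exact hv0 (SzegoAux.kernel hd S Z hZ n v hv)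
  refine ⟨hmain, ?_, hdet⟩
  rw [Matrix.star_eq_conjTranspose, Matrix.det_mul, Matrix.det_conjTranspose]
  exact mul_ne_zero (star_ne_zero.mpr hdet) hdet
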